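/- arXiv:1101.4193 — 4 statements merged into one kernel-verified Lean document; each statement's English description precedes it below -/
import Mathlib

section
/- For any two events e, e' in a distributed computation, e happens-before e' if and only if the vector clock of e is strictly less than the vector clock of e' (componentwise ≤ with at least one strict inequality). -/
/-- A distributed computation on `n` processes: each process `p` executes a
finite sequence of `len p` events; `src p k = some (q, m)` means the `k`-th
event of process `p` is a receive whose (unique) matching send is the `m`-th
event of process `q`; `src p k = none` means it is internal or a send. -/
structure Comp (n : ℕ) where
  len : Fin n → ℕ
  src : Fin n → ℕ → Option (Fin n × ℕ)

namespace Comp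

variable {n : ℕ}

/-- `e` is an actual event of the computation. -/
def Valid (c : Comp n) (e : Fin n × ℕ) : Prop := e.2 < c.len e.1

/-- Every receive is matched to a valid send on a different process. -/
def Matched (c : Comp n) : Prop :=
  ∀ p k q m, c.src p k = some (q, m) → q ≠ p ∧ c.Valid (q, m)

/-- One-step causality: program order on a process, or a send-receive edge. -/
def Step (c : Comp n) (e e' : Fin n × ℕ) : Prop :=
  (e.1 = e'.1 ∧ e.2 < e'.2) ∨ c.src e'.1 e'.2 = some e

/-- Happens-before: the smallest transitive relation containing program
order and the send-receive pairs. -/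
def hb (c : Comp n) : Fin n × ℕ → Fin n × ℕ → Prop :=
  Relation.TransGen c.Step

/-- `V` is the vector clock of the computation: process `p` increments its own
component at each of its events, and a receive takes the componentwise max of
the local clock and the sender's clock. -/
def IsVC (c : Comp n) (V : Fin n × ℕ → Fin n → ℕ) : Prop :=
  (∀ p k, V (p, k) p = k + 1) ∧
  (∀ p k j, j ≠ p → c.src p k = none →
      V (p, k) j = if k = 0 then 0 else V (p, k - 1) j) ∧
  (∀ p k j q m, j ≠ p → c.src p k = some (q, m) →
      V (p, k) j = max (if k = 0 then 0 else V (p, k - 1) j) (V (q, m) j))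

end Comp

section Aux
variable {n : ℕ} (c : Comp n) (V : Fin n × ℕ → Fin n → ℕ)

lemma step_wf (hM : c.Matched) (hacyclic : ∀ e, ¬ c.hb e e) : WellFounded c.Step := by
  have hvalid : ∀ e, c.Valid e → Acc c.Step e := by
    have hfin : {e : Fin n × ℕ | c.Valid e}.Finite := by
      apply Set.Finite.subset
        ((Set.finite_univ (α := Fin n)).prod (Set.finite_Iio (Finset.univ.sup c.len)))
      intro e he
      refine ⟨trivial, Set.mem_Iio.mpr ?_⟩
      exact lt_of_lt_of_le he (Finset.le_sup (Finset.mem_univ e.1))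
    haveI : IsTrans (Fin n × ℕ) c.hb := ⟨fun _ _ _ => Relation.TransGen.trans⟩
    haveI : IsIrrefl (Fin n × ℕ) c.hb := ⟨hacyclic⟩
    haveI : IsStrictOrder (Fin n × ℕ) c.hb := ⟨⟩
    have hwo := hfin.wellFoundedOn (r := c.hb)
    intro e he
    refine hwo.induction he ?_
    intro y hy IH
    constructor
    rintro g (⟨h1, h2⟩ | h)
    · refine IH g ?_ (Relation.TransGen.single (Or.inl ⟨h1, h2⟩))
      show g.2 < c.len g.1
      rw [h1]
      exact h2.trans hy
    · obtain ⟨hne, hval⟩ := hM y.1 y.2 g.1 g.2 (by rw [h])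
      exact IH g hval (Relation.TransGen.single (Or.inr h))
  constructor
  rintro ⟨p, k⟩
  induction k using Nat.strong_induction_on with
  | _ k IH =>
    constructor
    rintro ⟨q, m⟩ (⟨h1, h2⟩ | h)
    · dsimp only at h1 h2
      subst h1
      exact IH m h2
    · exact hvalid _ (hM p k q m h).2

lemma vc_inv (hV : c.IsVC V) (hM : c.Matched) (hacyclic : ∀ e, ¬ c.hb e e) :
    ∀ f (j : Fin n) (t : ℕ), V f j = t + 1 → (j, t) = f ∨ c.hb (j, t) f := by
  obtain ⟨hV1, hV2, hV3⟩ := hV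
  have hwf := step_wf c hM hacyclic
  intro f
  induction f using hwf.induction with
  | _ f IH =>
    obtain ⟨p, k⟩ := f
    intro j t ht
    by_cases hjp : j = p
    · subst hjp
      rw [hV1] at ht
      left
      have : t = k := by omega
      subst this
      rfl
    · have hcomb : ∀ g, c.Step g (p, k) → V g j = t + 1 →
          (j, t) = (p, k) ∨ c.hb (j, t) (p, k) := by
        intro g hg hgt
        rcases IH g hg j t hgt with h | h
        · rw [h]
          exact Or.inr (Relation.TransGen.single hg)
        · exact Or.inr (h.tail hg)
      cases hsrc : c.src p k with
      | none =>
        rw [hV2 p k j hjp hsrc] at ht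
        by_cases hk : k = 0
        · rw [if_pos hk] at ht; omega
        · rw [if_neg hk] at ht
          exact hcomb (p, k-1) (Or.inl ⟨rfl, by omega⟩) ht
      | some qm =>
        obtain ⟨q, m⟩ := qm
        rw [hV3 p k j q m hjp hsrc] at ht
        rcases le_total (if k = 0 then 0 else V (p, k-1) j) (V (q, m) j) with h | h
        · rw [max_eq_right h] at ht
          exact hcomb (q, m) (Or.inr hsrc) ht
        · rw [max_eq_left h] at ht
          by_cases hk : k = 0
          · rw [if_pos hk] at ht; omega
          · rw [if_neg hk] at ht
            exact hcomb (p, k-1) (Or.inl ⟨rfl, by omega⟩) ht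

lemma vc_step_po (hV : c.IsVC V) (p : Fin n) (k : ℕ) (j : Fin n) :
    V (p, k) j ≤ V (p, k+1) j := by
  obtain ⟨hV1, hV2, hV3⟩ := hV
  by_cases hjp : j = p
  · subst hjp; rw [hV1, hV1]; omega
  · cases hsrc : c.src p (k+1) with
    | none =>
      rw [hV2 p (k+1) j hjp hsrc, if_neg (Nat.succ_ne_zero k)]
      simp
    | some qm =>
      obtain ⟨q, m⟩ := qm
      rw [hV3 p (k+1) j q m hjp hsrc, if_neg (Nat.succ_ne_zero k)]
      simp only [Nat.add_sub_cancel]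
      exact le_max_left _ _

lemma vc_po_le (hV : c.IsVC V) (p : Fin n) (k k' : ℕ) (j : Fin n) (h : k ≤ k') :
    V (p, k) j ≤ V (p, k') j := by
  induction k' with
  | zero =>
    have : k = 0 := by omega
    subst this; exact le_refl _
  | succ k'' IH =>
    by_cases hk : k = k'' + 1
    · subst hk; exact le_refl _
    · have hk' : k ≤ k'' := by omega
      exact (IH hk').trans (vc_step_po c V hV p k'' j)

lemma vc_recv (hV : c.IsVC V) (hM : c.Matched) (hacyclic : ∀ e, ¬ c.hb e e)
    {p : Fin n} {k : ℕ} {q : Fin n} {m : ℕ} (hsrc : c.src p k = some (q, m)) :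
    V (q, m) p ≤ k ∧ ∀ j, j ≠ p → V (q, m) j ≤ V (p, k) j := by
  constructor
  · by_contra hlt
    push_neg at hlt
    have ht : V (q, m) p = (V (q, m) p - 1) + 1 := by omega
    rcases vc_inv c V hV hM hacyclic (q, m) p (V (q, m) p - 1) ht with h | h
    · exact (hM p k q m hsrc).1 ((congrArg Prod.fst h).symm)
    · set t := V (q, m) p - 1 with htd
      have htk : k ≤ t := by omega
      have hstep : c.Step (q, m) (p, k) := Or.inr hsrc
      have h2 : c.hb (q, m) (p, t) := by
        rcases Nat.eq_or_lt_of_le htk with he | hlt'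
        · rw [← he]; exact Relation.TransGen.single hstep
        · exact (Relation.TransGen.single hstep).tail (Or.inl ⟨rfl, hlt'⟩)
      exact hacyclic _ (h.trans h2)
  · intro j hj
    rw [hV.2.2 p k j q m hj hsrc]
    exact le_max_right _ _

lemma vc_step_mono (hV : c.IsVC V) (hM : c.Matched) (hacyclic : ∀ e, ¬ c.hb e e)
    {e g : Fin n × ℕ} (h : c.Step e g) :
    (∀ j, V e j ≤ V g j) ∧ V e g.1 < V g g.1 := by
  obtain ⟨p, k⟩ := g
  rcases h with ⟨h1, h2⟩ | h
  · obtain ⟨q, m⟩ := e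
    dsimp only at h1 h2 ⊢
    subst h1
    refine ⟨fun j => vc_po_le c V hV q m k j (le_of_lt h2), ?_⟩
    rw [hV.1, hV.1]; omega
  · obtain ⟨q, m⟩ := e
    have hrecv := vc_recv c V hV hM hacyclic h
    dsimp only
    constructor
    · intro j
      by_cases hj : j = p
      · subst hj
        rw [hV.1]
        exact hrecv.1.trans (Nat.le_succ k)
      · exact hrecv.2 j hj
    · rw [hV.1]
      exact Nat.lt_succ_of_le hrecv.1

end Aux


/-- **Mattern's theorem**: `e` happens-before `e'` iff the vector clock of `e`
is strictly less than the vector clock of `e'` (componentwise `≤` together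
with inequality). -/
theorem hb_iff_vectorClock_lt {n : ℕ} (c : Comp n) (V : Fin n × ℕ → Fin n → ℕ)
    (hV : c.IsVC V) (hM : c.Matched) (hacyclic : ∀ e, ¬ c.hb e e)
    (e e' : Fin n × ℕ) (he : c.Valid e) (he' : c.Valid e') :
    c.hb e e' ↔ ((∀ i, V e i ≤ V e' i) ∧ V e ≠ V e') := by
  constructor
  · intro h
    clear he he'
    have key : (∀ j, V e j ≤ V e' j) ∧ V e e'.1 < V e' e'.1 := by
      induction h with
      | single hs => exact vc_step_mono c V hV hM hacyclic hs
      | tail hab hbc IH =>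
        have hs := vc_step_mono c V hV hM hacyclic hbc
        exact ⟨fun j => (IH.1 j).trans (hs.1 j), lt_of_le_of_lt (IH.1 _) hs.2⟩
    refine ⟨key.1, fun hcontra => ?_⟩
    have hlt := key.2
    rw [hcontra] at hlt
    exact lt_irrefl _ hlt
  · rintro ⟨h1, h2⟩
    obtain ⟨p, k⟩ := e
    obtain ⟨p', k'⟩ := e'
    have hk : k + 1 ≤ V (p', k') p := by
      have := h1 p
      rw [hV.1] at this
      exact this
    by_cases hp : p = p'
    · subst hp
      rw [hV.1] at hk
      have hkk : k ≤ k' := by omega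
      rcases Nat.eq_or_lt_of_le hkk with heq | hlt
      · subst heq
        exact absurd rfl h2
      · exact Relation.TransGen.single (Or.inl ⟨rfl, hlt⟩)
    · have ht : V (p', k') p = (V (p', k') p - 1) + 1 := by omega
      rcases vc_inv c V hV hM hacyclic (p', k') p _ ht with heq | hhb
      · exact absurd (congrArg Prod.fst heq) hp
      · have hkt : k ≤ V (p', k') p - 1 := by omega
        rcases Nat.eq_or_lt_of_le hkt with heq | hlt
        · rw [heq]; exact hhb
        · refine Relation.TransGen.head ?_ hhb
          exact Or.inl ⟨rfl, hlt⟩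
end

section
/- The componentwise max operation on ℕ^n is associative, commutative, idempotent, and monotone in each argument; consequently the vector clock of any event is the componentwise max of the unit contribution vectors of all events in its causal past. -/
namespace Comp

variable {n : ℕ}

/-- happens-before or equal -/
def hbe (c : Comp n) (a b : Fin n × ℕ) : Prop := c.hb a b ∨ a = b

lemma hbe_refl (c : Comp n) (a : Fin n × ℕ) : c.hbe a a := Or.inr rfl

lemma hbe_trans {c : Comp n} {a b d : Fin n × ℕ} (h1 : c.hbe a b) (h2 : c.hbe b d) :
    c.hbe a d := by
  rcases h1 with h1 | rfl
  · rcases h2 with h2 | rfl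
    · exact Or.inl (h1.trans h2)
    · exact Or.inl h1
  · exact h2

lemma step_hb {c : Comp n} {a b : Fin n × ℕ} (h : c.Step a b) : c.hb a b :=
  Relation.TransGen.single h

lemma hbe_step_hb {c : Comp n} {a b d : Fin n × ℕ} (h1 : c.hbe a b) (h2 : c.Step b d) :
    c.hb a d := by
  rcases h1 with h1 | rfl
  · exact h1.tail h2
  · exact Relation.TransGen.single h2

lemma valid_finite (c : Comp n) : {e : Fin n × ℕ | c.Valid e}.Finite := by
  apply Set.Finite.subset
    ((Set.finite_univ (α := Fin n)).prod (Set.finite_Iio (Finset.univ.sup c.len)))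
  rintro ⟨p, k⟩ hk
  refine Set.mem_prod.mpr ⟨Set.mem_univ _, Set.mem_Iio.mpr ?_⟩
  exact lt_of_lt_of_le hk (Finset.le_sup (Finset.mem_univ p))

noncomputable def meas (c : Comp n) (e : Fin n × ℕ) : ℕ :=
  Set.ncard {f | c.Valid f ∧ c.hb f e}

lemma meas_lt {c : Comp n} {a b : Fin n × ℕ} (hirr : ∀ e, ¬ c.hb e e)
    (ha : c.Valid a) (h : c.hb a b) : c.meas a < c.meas b := by
  apply Set.ncard_lt_ncard
  · constructor
    · rintro f ⟨hf1, hf2⟩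
      exact ⟨hf1, hf2.trans h⟩
    · intro hsub
      exact hirr a (hsub ⟨ha, h⟩).2
  · exact (c.valid_finite).subset (fun f hf => hf.1)


end Comp

namespace Comp

lemma hb_elim' {n : ℕ} {c : Comp n} {q : Fin n} {m k : ℕ} {p : Fin n}
    (h : c.hb (q, m) (p, k)) :
    (0 < k ∧ c.hbe (q, m) (p, k - 1)) ∨ ∃ f, c.src p k = some f ∧ c.hbe (q, m) f := by
  rcases (Relation.TransGen.tail'_iff).mp h with ⟨f, hrt, hstep⟩
  have hbf : c.hbe (q, m) f := by
    rcases (Relation.reflTransGen_iff_eq_or_transGen.mp hrt) with h' | h'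
    · exact Or.inr h'.symm
    · exact Or.inl h'
  rcases hstep with ⟨h1, h2⟩ | h2
  · left
    refine ⟨by omega, ?_⟩
    rcases eq_or_lt_of_le (show f.2 ≤ k - 1 by omega) with he | hl
    · have hf : f = (p, k - 1) := Prod.ext h1 he
      rwa [hf] at hbf
    · exact Or.inl (c.hbe_step_hb hbf (Or.inl ⟨h1, hl⟩))
  · exact Or.inr ⟨f, h2, hbf⟩

lemma vc_sup {n : ℕ} {c : Comp n} {V : Fin n × ℕ → Fin n → ℕ} (hV : c.IsVC V)
    (hM : c.Matched) (hirr : ∀ e, ¬ c.hb e e) :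
    ∀ N p k, c.meas (p, k) < N → c.Valid (p, k) → ∀ j,
      (∃ q m, c.Valid (q, m) ∧ c.hbe (q, m) (p, k) ∧
          V (p, k) j = if j = q then m + 1 else 0) ∧
      (∀ q m, c.Valid (q, m) → c.hbe (q, m) (p, k) →
          (if j = q then m + 1 else 0) ≤ V (p, k) j) := by
  obtain ⟨hown, hnone, hsome⟩ := hV
  intro N
  induction N with
  | zero => intro p k h; omega
  | succ N ih =>
    intro p k hm hval j
    -- upper bound for own component is easy from acyclicity
    by_cases hjp : j = p
    · subst hjp
      constructor
      · exact ⟨j, k, hval, c.hbe_refl _, by simp [hown]⟩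
      · intro q m hv he
        by_cases hq : j = q
        · subst hq
          rw [if_pos rfl, hown]
        -- need m + 1 ≤ k + 1, i.e. m ≤ k
          have hmk : m ≤ k := by
            rcases he with he | he
            · by_contra hc
              push_neg at hc
              have : c.hb (j, k) (j, m) := c.step_hb (Or.inl ⟨rfl, hc⟩)
              exact hirr _ (this.trans he)
            · exact le_of_eq (congrArg Prod.snd he)
          omega
        · rw [if_neg hq]; omega
    · -- j ≠ p
      -- helpers for the predecessor on the same process
      have hub_prev : k ≠ 0 → (∀ q m, c.Valid (q, m) → c.hbe (q, m) (p, k - 1) →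
            (if j = q then m + 1 else 0) ≤ V (p, k - 1) j) ∧
          (∃ q m, c.Valid (q, m) ∧ c.hbe (q, m) (p, k - 1) ∧
            V (p, k - 1) j = if j = q then m + 1 else 0) := by
        intro hk0
        have hvprev : c.Valid (p, k - 1) := by
          have := hval
          simp only [Comp.Valid] at this ⊢
          omega
        have hbprev : c.hb (p, k - 1) (p, k) := c.step_hb (Or.inl ⟨rfl, by omega⟩)
        have hlt := c.meas_lt hirr hvprev hbprev
        obtain ⟨hmem, hub⟩ := ih p (k - 1) (by omega) hvprev j
        exact ⟨hub, hmem⟩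
      have hprev_le : k ≠ 0 → V (p, k - 1) j ≤ V (p, k) j := by
        intro hk0
        rcases hsrc : c.src p k with _ | f
        · rw [hnone p k j hjp hsrc, if_neg hk0]
        · obtain ⟨q0, m0⟩ := f
          rw [hsome p k j q0 m0 hjp hsrc, if_neg hk0]
          exact le_max_left _ _
      rcases hsrc : c.src p k with _ | f
      · -- internal / send event
        have hvk : V (p, k) j = if k = 0 then 0 else V (p, k - 1) j :=
          hnone p k j hjp hsrc
        by_cases hk0 : k = 0
        · subst hk0
          rw [if_pos rfl] at hvk
          constructor
          · exact ⟨p, 0, hval, c.hbe_refl _, by rw [hvk, if_neg hjp]⟩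
          · intro q m hv he
            rcases he with he | he
            · rcases c.hb_elim' he with ⟨h0, _⟩ | ⟨f, hf, _⟩
              · omega
              · rw [hsrc] at hf; exact absurd hf (by simp)
            · have : q = p := congrArg Prod.fst he
              rw [if_neg (this ▸ hjp), hvk]
        · rw [if_neg hk0] at hvk
          obtain ⟨hub, hmem⟩ := hub_prev hk0
          have hbprev : c.hb (p, k - 1) (p, k) := c.step_hb (Or.inl ⟨rfl, by omega⟩)
          constructor
          · obtain ⟨q, m, hv, he, heq⟩ := hmem
            exact ⟨q, m, hv, c.hbe_trans he (Or.inl hbprev), by rw [hvk, heq]⟩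
          · intro q m hv he
            rcases he with he | he
            · rcases c.hb_elim' he with ⟨h0, he'⟩ | ⟨f, hf, _⟩
              · rw [hvk]; exact hub q m hv he'
              · rw [hsrc] at hf; exact absurd hf (by simp)
            · have : q = p := congrArg Prod.fst he
              rw [if_neg (this ▸ hjp)]; omega
      · -- receive event
        obtain ⟨q0, m0⟩ := f
        obtain ⟨hne0, hvq0⟩ := hM p k q0 m0 hsrc
        have hbq0 : c.hb (q0, m0) (p, k) := c.step_hb (Or.inr hsrc)
        have hlt0 := c.meas_lt hirr hvq0 hbq0
        obtain ⟨hmemq, hubq⟩ := ih q0 m0 (by omega) hvq0 j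
        have hvk : V (p, k) j =
            max (if k = 0 then 0 else V (p, k - 1) j) (V (q0, m0) j) :=
          hsome p k j q0 m0 hjp hsrc
        constructor
        · -- membership
          by_cases hk0 : k = 0
          · obtain ⟨q, m, hv, he, heq⟩ := hmemq
            refine ⟨q, m, hv, c.hbe_trans he (Or.inl hbq0), ?_⟩
            rw [hvk, if_pos hk0, heq]
            simp
          · obtain ⟨hub, hmem⟩ := hub_prev hk0
            have hbprev : c.hb (p, k - 1) (p, k) := c.step_hb (Or.inl ⟨rfl, by omega⟩)
            rw [hvk, if_neg hk0]
            rcases max_choice (V (p, k - 1) j) (V (q0, m0) j) with hmax | hmax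
            · obtain ⟨q, m, hv, he, heq⟩ := hmem
              exact ⟨q, m, hv, c.hbe_trans he (Or.inl hbprev), by rw [hmax, heq]⟩
            · obtain ⟨q, m, hv, he, heq⟩ := hmemq
              exact ⟨q, m, hv, c.hbe_trans he (Or.inl hbq0), by rw [hmax, heq]⟩
        · -- upper bound
          intro q m hv he
          rcases he with he | he
          · rcases c.hb_elim' he with ⟨h0, he'⟩ | ⟨f, hf, he'⟩
            · have hk0 : k ≠ 0 := by omega
              obtain ⟨hub, _⟩ := hub_prev hk0
              calc (if j = q then m + 1 else 0) ≤ V (p, k - 1) j := hub q m hv he'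
                _ ≤ V (p, k) j := hprev_le hk0
            · rw [hsrc] at hf
              have hf' : f = (q0, m0) := (Option.some.inj hf).symm
              subst hf'
              calc (if j = q then m + 1 else 0) ≤ V (q0, m0) j := hubq q m hv he'
                _ ≤ V (p, k) j := by rw [hvk]; exact le_max_right _ _
          · have : q = p := congrArg Prod.fst he
            rw [if_neg (this ▸ hjp)]; omega

end Comp

/-- Componentwise max on `ℕ^n` is associative, commutative, idempotent and
monotone in each argument; consequently the vector clock of an event is the
componentwise supremum of the unit contribution vectors of all events in its
causal past (event `(q, m)` contributes `m + 1` in component `q`). -/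
theorem componentwise_max_lattice_and_vc_as_sup :
    (∀ (n : ℕ) (u v w : Fin n → ℕ),
       ((fun i => max (max (u i) (v i)) (w i)) =
          fun i => max (u i) (max (v i) (w i))) ∧
       ((fun i => max (u i) (v i)) = fun i => max (v i) (u i)) ∧
       ((fun i => max (u i) (u i)) = u) ∧
       ((∀ i, u i ≤ v i) → ∀ i, max (u i) (w i) ≤ max (v i) (w i)) ∧
       ((∀ i, u i ≤ v i) → ∀ i, max (w i) (u i) ≤ max (w i) (v i))) ∧
    (∀ (n : ℕ) (c : Comp n) (V : Fin n × ℕ → Fin n → ℕ),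
       c.IsVC V → c.Matched → (∀ e, ¬ c.hb e e) →
       ∀ p k, c.Valid (p, k) → ∀ j,
         V (p, k) j = sSup {x : ℕ | ∃ q m, c.Valid (q, m) ∧
           (c.hb (q, m) (p, k) ∨ (q, m) = (p, k)) ∧
           x = (if j = q then m + 1 else 0)}) := by
  constructor
  · intro n u v w
    exact ⟨funext fun i => max_assoc _ _ _, funext fun i => max_comm _ _,
      funext fun i => max_self _,
      fun h i => max_le_max (h i) le_rfl, fun h i => max_le_max le_rfl (h i)⟩
  · intro n c V hV hM hirr p k hval j
    obtain ⟨⟨q, m, hv, he, heq⟩, hub⟩ :=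
      Comp.vc_sup hV hM hirr (c.meas (p, k) + 1) p k (by omega) hval j
    set S : Set ℕ := {x : ℕ | ∃ q m, c.Valid (q, m) ∧
      (c.hb (q, m) (p, k) ∨ (q, m) = (p, k)) ∧ x = (if j = q then m + 1 else 0)} with hS
    have hmem : V (p, k) j ∈ S := ⟨q, m, hv, he, heq⟩
    have hub' : ∀ x ∈ S, x ≤ V (p, k) j := by
      rintro x ⟨q', m', hv', he', rfl⟩
      exact hub q' m' hv' he'
    exact le_antisymm (le_csSup ⟨V (p, k) j, fun x hx => hub' x hx⟩ hmem)
      (csSup_le ⟨_, hmem⟩ hub')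
end

section
/- If every pair of conflicting accesses (same location, at least one write) in a computation is ordered by happens-before, then every linearization (topological sort) of the happens-before order yields the same final value at each memory location. -/
/-- `r` is a linear extension (topological sort, as a reflexive total order)
of the strict partial order `hb`. -/
def IsLinearExt {E : Type*} (hb r : E → E → Prop) : Prop :=
  (∀ e e', hb e e' → r e e') ∧
  (∀ e, r e e) ∧
  (∀ e e', r e e' ∨ r e' e) ∧
  (∀ e e', r e e' → r e' e → e = e') ∧
  (∀ e e' e'', r e e' → r e' e'' → r e e'')

/-- `w` is the last write to location `l` in the execution order `r`. -/
def IsLastWrite {E L : Type*} (loc : E → L) (isWrite : E → Prop)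
    (r : E → E → Prop) (l : L) (w : E) : Prop :=
  isWrite w ∧ loc w = l ∧ ∀ w', isWrite w' → loc w' = l → r w' w

/-- **Race-freedom implies determinacy**: if every pair of conflicting
accesses (same location, at least one write) is ordered by happens-before,
then every linearization of happens-before yields the same final value at
each memory location (the value of the last write to it). -/
theorem raceFree_deterministic_final_values {E L Val : Type*} [Finite E]
    (hb : E → E → Prop)
    (hirr : ∀ e, ¬ hb e e)
    (htrans : ∀ a b c, hb a b → hb b c → hb a c)
    (loc : E → L) (isWrite : E → Prop) (val : E → Val)
    (hrf : ∀ e e', loc e = loc e' → (isWrite e ∨ isWrite e') → e ≠ e' →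
        hb e e' ∨ hb e' e)
    (r₁ r₂ : E → E → Prop)
    (h₁ : IsLinearExt hb r₁) (h₂ : IsLinearExt hb r₂)
    (l : L) (w₁ w₂ : E)
    (hw₁ : IsLastWrite loc isWrite r₁ l w₁)
    (hw₂ : IsLastWrite loc isWrite r₂ l w₂) :
    val w₁ = val w₂ := by
  obtain ⟨hw₁w, hw₁l, hw₁last⟩ := hw₁
  obtain ⟨hw₂w, hw₂l, hw₂last⟩ := hw₂
  suffices h : w₁ = w₂ by rw [h]
  by_contra hne
  rcases hrf w₁ w₂ (hw₁l.trans hw₂l.symm) (Or.inl hw₁w) hne with h | h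
  · exact hne (h₁.2.2.2.1 w₁ w₂ (h₁.1 _ _ h) (hw₁last w₂ hw₂w hw₂l))
  · exact hne (h₂.2.2.2.1 w₁ w₂ (hw₂last w₁ hw₁w hw₁l) (h₂.1 _ _ h))
end

section
/- For events e on process i and e' on process j with i ≠ j, e → e' if and only if V(e)[i] ≤ V(e')[i]. -/
namespace VCAux

variable {n : ℕ} (c : Comp n) (V : Fin n × ℕ → Fin n → ℕ)

instance : Finite {e : Fin n × ℕ // c.Valid e} := by
  apply Finite.of_injective
    (fun e => (⟨e.1.1, ⟨e.1.2, e.2⟩⟩ : Σ p : Fin n, Fin (c.len p)))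
  rintro ⟨⟨p, k⟩, h⟩ ⟨⟨q, l⟩, h'⟩ heq
  obtain ⟨h1', h2'⟩ := Sigma.ext_iff.mp heq
  dsimp only at h1' h2'
  subst h1'
  have h3' := eq_of_heq h2'
  replace h3' : k = l := congrArg Fin.val h3'
  simp [h3']

lemma succ_mono (hV : c.IsVC V) (p : Fin n) (k : ℕ) (x : Fin n) :
    V (p, k) x ≤ V (p, k + 1) x := by
  obtain ⟨h1, h2, h3⟩ := hV
  by_cases hx : x = p
  · subst hx; rw [h1, h1]; omega
  · cases hsrc : c.src p (k + 1) with
    | none =>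
        rw [h2 p (k + 1) x hx hsrc]
        simp
    | some qm =>
        rw [h3 p (k + 1) x qm.1 qm.2 hx (by simpa using hsrc)]
        simp only [Nat.succ_ne_zero, if_false, Nat.add_sub_cancel]
        exact le_max_left _ _

lemma po_mono (hV : c.IsVC V) (p : Fin n) {k k' : ℕ} (h : k ≤ k') (x : Fin n) :
    V (p, k) x ≤ V (p, k') x := by
  induction k', h using Nat.le_induction with
  | base => exact le_refl _
  | succ k' hk IH => exact IH.trans (succ_mono c V hV p k' x)

lemma downset (hV : c.IsVC V) (hM : c.Matched) (hacyclic : ∀ e, ¬ c.hb e e) :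
    ∀ e : Fin n × ℕ, c.Valid e → ∀ p r, r < V e p →
      (p, r) = e ∨ c.hb (p, r) e := by
  obtain ⟨h1, h2, h3⟩ := hV
  have hwf : WellFounded (fun a b : {e : Fin n × ℕ // c.Valid e} => c.hb a.1 b.1) := by
    have hi : IsIrrefl {e : Fin n × ℕ // c.Valid e}
        (fun a b => c.hb a.1 b.1) := ⟨fun a => hacyclic a.1⟩
    have ht : IsTrans {e : Fin n × ℕ // c.Valid e}
        (fun a b => c.hb a.1 b.1) := ⟨fun _ _ _ hab hbc => hab.trans hbc⟩
    exact Finite.wellFounded_of_trans_of_irrefl _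
  intro e he p r hr
  refine hwf.induction
    (C := fun e : {e : Fin n × ℕ // c.Valid e} =>
      ∀ p r, r < V e.1 p → (p, r) = e.1 ∨ c.hb (p, r) e.1)
    ⟨e, he⟩ ?_ p r hr
  clear hr r p he e
  rintro ⟨⟨p0, k⟩, hval⟩ IH p r hr
  by_cases hp : p = p0
  · subst hp
    rw [h1] at hr
    rcases Nat.lt_succ_iff_lt_or_eq.mp hr with hlt | rfl
    · exact Or.inr (Relation.TransGen.single (Or.inl ⟨rfl, hlt⟩))
    · exact Or.inl rfl
  · cases hsrc : c.src p0 k with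
    | none =>
        rw [h2 p0 k p hp hsrc] at hr
        by_cases hk : k = 0
        · simp [hk] at hr
        · rw [if_neg hk] at hr
          have hv' : c.Valid (p0, k - 1) := lt_of_le_of_lt (Nat.sub_le _ _) hval
          have hstep : c.hb (p0, k - 1) (p0, k) :=
            Relation.TransGen.single (Or.inl ⟨rfl, Nat.sub_lt (Nat.pos_of_ne_zero hk) one_pos⟩)
          rcases IH ⟨(p0, k - 1), hv'⟩ hstep p r hr with heq | hhb
          · exact absurd (congrArg Prod.fst heq) hp
          · exact Or.inr (hhb.trans hstep)
    | some qm =>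
        obtain ⟨q, m'⟩ := qm
        obtain ⟨hqp, hqv⟩ := hM p0 k q m' hsrc
        rw [h3 p0 k p q m' hp hsrc] at hr
        have hstep : c.hb (q, m') (p0, k) :=
          Relation.TransGen.single (Or.inr hsrc)
        rcases lt_max_iff.mp hr with hr' | hr'
        · by_cases hk : k = 0
          · simp [hk] at hr'
          · rw [if_neg hk] at hr'
            have hv' : c.Valid (p0, k - 1) := lt_of_le_of_lt (Nat.sub_le _ _) hval
            have hstep' : c.hb (p0, k - 1) (p0, k) :=
              Relation.TransGen.single (Or.inl ⟨rfl, Nat.sub_lt (Nat.pos_of_ne_zero hk) one_pos⟩)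
            rcases IH ⟨(p0, k - 1), hv'⟩ hstep' p r hr' with heq | hhb
            · exact absurd (congrArg Prod.fst heq) hp
            · exact Or.inr (hhb.trans hstep')
        · rcases IH ⟨(q, m'), hqv⟩ hstep p r hr' with heq | hhb
          · exact Or.inr (heq ▸ hstep)
          · exact Or.inr (hhb.trans hstep)

lemma valid_of_step (hM : c.Matched) {e e' : Fin n × ℕ}
    (hs : c.Step e e') (hv : c.Valid e') : c.Valid e := by
  rcases hs with ⟨heq, hlt⟩ | hsrc
  · unfold Comp.Valid at *
    rw [heq]
    exact hlt.trans hv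
  · exact (hM e'.1 e'.2 e.1 e.2 (by simpa using hsrc)).2

lemma step_mono (hV : c.IsVC V) (hM : c.Matched) (hacyclic : ∀ e, ¬ c.hb e e)
    {e e' : Fin n × ℕ} (hs : c.Step e e') (hv : c.Valid e') (x : Fin n) :
    V e x ≤ V e' x := by
  obtain ⟨p, a⟩ := e
  obtain ⟨p', b⟩ := e'
  rcases hs with ⟨heq, hlt⟩ | hsrc
  · simp only at heq hlt
    subst heq
    exact po_mono c V hV p hlt.le x
  · simp only at hsrc
    obtain ⟨h1, h2, h3⟩ := hV
    obtain ⟨hqp, hqv⟩ := hM p' b p a hsrc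
    by_cases hx : x = p'
    · subst hx
      rw [h1]
      by_contra hcon
      push_neg at hcon
      have hr : b + 1 < V (p, a) x := hcon
      rcases downset c V ⟨h1, h2, h3⟩ hM hacyclic (p, a) hqv x (b + 1) hr with heq | hhb
      · exact hqp (congrArg Prod.fst heq.symm)
      · have s2 : c.hb (p, a) (x, b) := Relation.TransGen.single (Or.inr hsrc)
        have s3 : c.hb (x, b) (x, b + 1) :=
          Relation.TransGen.single (Or.inl ⟨rfl, Nat.lt_succ_self b⟩)
        exact hacyclic _ ((hhb.trans s2).trans s3)
    · rw [h3 p' b x p a hx hsrc]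
      exact le_max_right _ _

lemma hb_mono (hV : c.IsVC V) (hM : c.Matched) (hacyclic : ∀ e, ¬ c.hb e e)
    {e e' : Fin n × ℕ} (h : c.hb e e') (hv : c.Valid e') (x : Fin n) :
    V e x ≤ V e' x := by
  induction h with
  | single hs => exact step_mono c V hV hM hacyclic hs hv x
  | tail hab hbc IH =>
      have hvb := valid_of_step c hM hbc hv
      exact (IH hvb).trans (step_mono c V hV hM hacyclic hbc hv x)

end VCAux

/-- Pairwise causality test: for events `e` on process `i` and `e'` on
process `j` with `i ≠ j`, `e → e'` iff `V e i ≤ V e' i`: comparing a single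
component suffices. -/
theorem hb_iff_single_component {n : ℕ} (c : Comp n)
    (V : Fin n × ℕ → Fin n → ℕ)
    (hV : c.IsVC V) (hM : c.Matched) (hacyclic : ∀ e, ¬ c.hb e e)
    (i j : Fin n) (hij : i ≠ j) (k m : ℕ)
    (he : c.Valid (i, k)) (he' : c.Valid (j, m)) :
    c.hb (i, k) (j, m) ↔ V (i, k) i ≤ V (j, m) i := by
  constructor
  · intro h
    exact VCAux.hb_mono c V hV hM hacyclic h he' i
  · intro h
    have hk : k < V (j, m) i := by
      have := hV.1 i k
      omega
    rcases VCAux.downset c V hV hM hacyclic (j, m) he' i k hk with heq | hhb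
    · exact absurd (congrArg Prod.fst heq) hij
    · exact hhb
end
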